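/- Pullback of optimal stochastic policies for the multi-period newsvendor problem: let σ : Z_δ → [0,1] with ∑_{a'∈Z_δ} σ(a') = 1 maximize ∑_{a'∈Z_δ} σ(a')·G(a') among all probability distributions on Z_δ, where G(a') := ∑_{d∈Z_δ} μ(d)·((min(d, a') − min(d, 0))·C_s − a'·C_p). Define the policy Λ(σ) by Λ(σ)(a | s_t) := σ(a − F_t) for a ∈ F_t + Z_δ. Then Λ(σ) is an optimal policy of the newsvendor MDP with discount γ = 0: for every t ∈ ℕ, ∑_{a∈F_t+Z_δ} Λ(σ)(a|s_t)·E(t,a) = max_{a∈F_t+Z_δ} E(t,a). -/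

import Mathlib

/-- The reward of ordering `a` newspapers on day `t` under deviation `d`:
`Rew_t(a,d) = min(F_t + d, a)·C_s − a·C_p`. -/
noncomputable def Rew (F : ℕ → ℕ) (Cs Cp : ℝ) (t : ℕ) (a d : ℤ) : ℝ :=
  ((min ((F t : ℤ) + d) a : ℤ) : ℝ) * Cs - (a : ℝ) * Cp

/-- The expected reward `E(t,a) = ∑_{d ∈ Z_δ} μ(d)·Rew_t(a,d)`. -/
noncomputable def Erw (F : ℕ → ℕ) (Z : Finset ℤ) (μ : ℤ → ℝ) (Cs Cp : ℝ)
    (t : ℕ) (a : ℤ) : ℝ :=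
  ∑ d ∈ Z, μ d * Rew F Cs Cp t a d

/-- The admissible orders on day `t`: the set `F_t + Z_δ`. -/
def Acts (F : ℕ → ℕ) (Z : Finset ℤ) (t : ℕ) : Finset ℤ :=
  Z.image (fun d => (F t : ℤ) + d)

/-- The reward function of the one-state quotient MDP:
`G(a') = ∑_{d ∈ Z_δ} μ(d)·((min(d,a') − min(d,0))·C_s − a'·C_p)`. -/
noncomputable def Gban (Z : Finset ℤ) (μ : ℤ → ℝ) (Cs Cp : ℝ) (a' : ℤ) : ℝ :=
  ∑ d ∈ Z, μ d * (((min d a' - min d 0 : ℤ) : ℝ) * Cs - (a' : ℝ) * Cp)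

/-- Pullback of optimal stochastic policies for the multi-period
newsvendor problem: if a probability distribution `σ` on `Z_δ` maximizes
`∑_{a'} σ(a')·G(a')` among all probability distributions on `Z_δ`, then the pulled-back
policy `Λ(σ)(a | s_t) = σ(a − F_t)` is optimal in the newsvendor MDP with discount
`γ = 0`: for every day `t`, its one-step expected reward
`∑_{a ∈ F_t+Z_δ} σ(a − F_t)·E(t,a)` is the greatest value of `E(t,·)` on `F_t + Z_δ`. -/
theorem newsvendor_pullback_optimal_policy
    (F : ℕ → ℕ) (Z : Finset ℤ) (hZ0 : (0 : ℤ) ∈ Z)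
    (μ : ℤ → ℝ) (hμ0 : ∀ d ∈ Z, 0 ≤ μ d) (hμ1 : ∑ d ∈ Z, μ d = 1)
    (Cp Cs : ℝ) (hCp : 0 < Cp) (hCpCs : Cp < Cs)
    (σ : ℤ → ℝ) (hσ0 : ∀ a, 0 ≤ σ a) (hσ1 : ∑ a ∈ Z, σ a = 1)
    (hσopt : ∀ τ : ℤ → ℝ, (∀ a, 0 ≤ τ a) → ∑ a ∈ Z, τ a = 1 →
      ∑ a ∈ Z, τ a * Gban Z μ Cs Cp a ≤ ∑ a ∈ Z, σ a * Gban Z μ Cs Cp a) :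
    ∀ t : ℕ, IsGreatest (Erw F Z μ Cs Cp t '' (Acts F Z t : Set ℤ))
      (∑ a ∈ Acts F Z t, σ (a - (F t : ℤ)) * Erw F Z μ Cs Cp t a) := by
  intro t
  set c : ℝ := ∑ d ∈ Z, μ d * ((((F t : ℤ) + min d 0 : ℤ) : ℝ) * Cs - (F t : ℝ) * Cp) with hc
  have key : ∀ a' : ℤ, Erw F Z μ Cs Cp t ((F t : ℤ) + a') = Gban Z μ Cs Cp a' + c := by
    intro a'
    rw [Erw, Gban, hc, ← Finset.sum_add_distrib]
    apply Finset.sum_congr rfl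
    intro d _
    rw [Rew]
    have hmin : min ((F t : ℤ) + d) ((F t : ℤ) + a') = (F t : ℤ) + min d a' := by omega
    rw [hmin]
    push_cast
    ring
  obtain ⟨m, hmZ, hm⟩ := Finset.exists_max_image Z (Gban Z μ Cs Cp) ⟨0, hZ0⟩
  have hσG : ∑ a ∈ Z, σ a * Gban Z μ Cs Cp a = Gban Z μ Cs Cp m := by
    apply le_antisymm
    · calc ∑ a ∈ Z, σ a * Gban Z μ Cs Cp a ≤ ∑ a ∈ Z, σ a * Gban Z μ Cs Cp m := by
            apply Finset.sum_le_sum; intro a ha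
            exact mul_le_mul_of_nonneg_left (hm a ha) (hσ0 a)
        _ = Gban Z μ Cs Cp m := by rw [← Finset.sum_mul, hσ1, one_mul]
    · have h := hσopt (fun a => if a = m then 1 else 0)
        (fun a => by positivity) (by simp [Finset.sum_ite_eq', hmZ])
      simpa [Finset.sum_ite_eq', hmZ, ite_mul] using h
  have hinj : ∀ a ∈ Z, ∀ b ∈ Z, (F t : ℤ) + a = (F t : ℤ) + b → a = b := by
    intro a _ b _ h; omega
  have hsum : ∑ a ∈ Acts F Z t, σ (a - (F t : ℤ)) * Erw F Z μ Cs Cp t a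
      = Gban Z μ Cs Cp m + c := by
    rw [Acts, Finset.sum_image hinj]
    have h1 : ∀ d ∈ Z, σ ((F t : ℤ) + d - (F t : ℤ)) * Erw F Z μ Cs Cp t ((F t : ℤ) + d)
        = σ d * (Gban Z μ Cs Cp d + c) := by
      intro d _
      have : (F t : ℤ) + d - (F t : ℤ) = d := by ring
      rw [this, key]
    rw [Finset.sum_congr rfl h1]
    have h2 : ∑ d ∈ Z, σ d * (Gban Z μ Cs Cp d + c)
        = ∑ d ∈ Z, σ d * Gban Z μ Cs Cp d + (∑ d ∈ Z, σ d) * c := by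
      rw [Finset.sum_mul, ← Finset.sum_add_distrib]
      apply Finset.sum_congr rfl; intros; ring
    rw [h2, hσG, hσ1, one_mul]
  rw [hsum]
  constructor
  · refine ⟨(F t : ℤ) + m, ?_, key m⟩
    simp only [Acts, Finset.coe_image, Set.mem_image, Finset.mem_coe]
    exact ⟨m, hmZ, rfl⟩
  · rintro x ⟨a, ha, rfl⟩
    simp only [Acts, Finset.coe_image, Set.mem_image, Finset.mem_coe] at ha
    obtain ⟨d, hd, rfl⟩ := ha
    rw [key]
    exact add_le_add (hm d hd) (le_refl c)
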